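/- Let β > 0 and γ ≥ 0 with βγ < 1, and let d > 0 be a real number. Then x̌_d < 1 if and only if β > 1 and d > (1−βγ)/((β−1)(1−γ)). -/
import Mathlib


/-- `x̌_d`, the larger root of `βd x² − (1−βγ+d(1+βγ)) x + γd = 0`. -/
noncomputable def xcheck (β γ d : ℝ) : ℝ :=
  (1 - β * γ + d * (1 + β * γ) +
    Real.sqrt ((1 - β * γ + d * (1 + β * γ)) ^ 2 - 4 * (β * γ) * d ^ 2)) / (2 * β * d)

/-- For `β > 0`, `γ ≥ 0`, `βγ < 1` and `d > 0`: `x̌_d < 1` iff `β > 1` and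
`d > (1−βγ)/((β−1)(1−γ))`. -/
theorem xcheck_lt_one_iff
    (β γ d : ℝ) (hβ : 0 < β) (hγ : 0 ≤ γ) (hβγ : β * γ < 1) (hd : 0 < d) :
    xcheck β γ d < 1 ↔ (1 < β ∧ (1 - β * γ) / ((β - 1) * (1 - γ)) < d) := by
  have hbg : 0 ≤ β * γ := mul_nonneg hβ.le hγ
  have h1 : 0 < 1 - β * γ := by linarith
  have h2bd : 0 < 2 * β * d := by positivity
  have hsnn : 0 ≤ Real.sqrt ((1 - β * γ + d * (1 + β * γ)) ^ 2 - 4 * (β * γ) * d ^ 2) :=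
    Real.sqrt_nonneg _
  rw [xcheck, div_lt_one h2bd]
  constructor
  · intro h
    have hA : 1 - β * γ + d * (1 + β * γ) < 2 * β * d := by linarith
    have hpos : 0 < 2 * β * d - (1 - β * γ + d * (1 + β * γ)) := by linarith
    have hsq : (1 - β * γ + d * (1 + β * γ)) ^ 2 - 4 * (β * γ) * d ^ 2 <
        (2 * β * d - (1 - β * γ + d * (1 + β * γ))) ^ 2 :=
      (Real.sqrt_lt' hpos).mp (by linarith)
    have hkey : 1 - β * γ < d * ((β - 1) * (1 - γ)) := by
      nlinarith [mul_pos hβ hd, hsq]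
    have hβ1 : 1 < β := by
      by_contra hc
      push_neg at hc
      have h5 : 0 < d * (2 * β - 1 - β * γ) := by nlinarith [hA, h1]
      have h6 : 0 < 2 * β - 1 - β * γ := by nlinarith [h5, hd]
      have h7 : γ < 1 := by nlinarith [h6, hβ]
      nlinarith [hkey, mul_nonneg (mul_nonneg hd.le (sub_nonneg.mpr hc))
        (sub_nonneg.mpr h7.le)]
    have hγ1 : γ < 1 := by nlinarith [mul_nonneg hγ (sub_nonneg.mpr hβ1.le)]
    have hden : 0 < (β - 1) * (1 - γ) := mul_pos (by linarith) (by linarith)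
    exact ⟨hβ1, (div_lt_iff₀ hden).mpr (by linarith)⟩
  · rintro ⟨hβ1, hdgt⟩
    have hγ1 : γ < 1 := by nlinarith [mul_nonneg hγ (sub_nonneg.mpr hβ1.le)]
    have hden : 0 < (β - 1) * (1 - γ) := mul_pos (by linarith) (by linarith)
    have hkey : 1 - β * γ < d * ((β - 1) * (1 - γ)) := by
      have := (div_lt_iff₀ hden).mp hdgt; linarith
    have hpos : 0 < 2 * β * d - (1 - β * γ + d * (1 + β * γ)) := by
      nlinarith [mul_pos hd (show (0:ℝ) < β - γ by linarith)]
    have h4 : 0 < β * d * (d * ((β - 1) * (1 - γ)) - (1 - β * γ)) :=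
      mul_pos (mul_pos hβ hd) (by linarith)
    have hsq : (1 - β * γ + d * (1 + β * γ)) ^ 2 - 4 * (β * γ) * d ^ 2 <
        (2 * β * d - (1 - β * γ + d * (1 + β * γ))) ^ 2 := by nlinarith [h4]
    have := (Real.sqrt_lt' hpos).mpr hsq
    linarith
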